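/- Let (S,T) be a pair of random variables on {0,...,m} × {0,...,n}, and let 1 ≤ k ≤ m, 1 ≤ l ≤ n. Then P(S ≥ 1, T ≥ 1) ≥ E[(C(m,k) − C(m−S,k))(C(n,l) − C(n−T,l))] / (C(m,k) C(n,l)). (Bivariate Fréchet inequality) -/

import Mathlib

open MeasureTheory

theorem bivariate_frechet_inequality
    {Ω : Type*} [MeasurableSpace Ω] (μ : Measure Ω) [IsProbabilityMeasure μ]
    (m n : ℕ) (S T : Ω → ℕ) (hS : Measurable S) (hT : Measurable T)
    (hSm : ∀ᵐ ω ∂μ, S ω ≤ m) (hTn : ∀ᵐ ω ∂μ, T ω ≤ n)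
    (k l : ℕ) (hk1 : 1 ≤ k) (hkm : k ≤ m) (hl1 : 1 ≤ l) (hln : l ≤ n) :
    (μ {ω | 1 ≤ S ω ∧ 1 ≤ T ω}).toReal ≥
      (∫ ω, ((m.choose k : ℝ) - ((m - S ω).choose k)) *
          ((n.choose l : ℝ) - ((n - T ω).choose l)) ∂μ) /
        ((m.choose k : ℝ) * (n.choose l : ℝ)) := by
  set c1 : ℝ := (m.choose k : ℝ) with hc1
  set c2 : ℝ := (n.choose l : ℝ) with hc2
  have hc1pos : 0 < c1 := by
    rw [hc1]; exact_mod_cast Nat.choose_pos hkm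
  have hc2pos : 0 < c2 := by
    rw [hc2]; exact_mod_cast Nat.choose_pos hln
  set f : Ω → ℝ := fun ω => (c1 - ((m - S ω).choose k : ℝ)) *
      (c2 - ((n - T ω).choose l : ℝ)) with hf
  set A : Set Ω := {ω | 1 ≤ S ω ∧ 1 ≤ T ω} with hA
  have hAmeas : MeasurableSet A := by
    apply MeasurableSet.inter
    · exact measurableSet_le measurable_const hS
    · exact measurableSet_le measurable_const hT
  -- bounds on factors
  have hfac1 : ∀ ω, 0 ≤ c1 - ((m - S ω).choose k : ℝ) ∧
      c1 - ((m - S ω).choose k : ℝ) ≤ c1 := by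
    intro ω
    constructor
    · have : ((m - S ω).choose k : ℝ) ≤ c1 := by
        rw [hc1]; exact_mod_cast Nat.choose_le_choose k (Nat.sub_le m (S ω))
      linarith
    · have : (0:ℝ) ≤ ((m - S ω).choose k : ℝ) := by positivity
      linarith
  have hfac2 : ∀ ω, 0 ≤ c2 - ((n - T ω).choose l : ℝ) ∧
      c2 - ((n - T ω).choose l : ℝ) ≤ c2 := by
    intro ω
    constructor
    · have : ((n - T ω).choose l : ℝ) ≤ c2 := by
        rw [hc2]; exact_mod_cast Nat.choose_le_choose l (Nat.sub_le n (T ω))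
      linarith
    · have : (0:ℝ) ≤ ((n - T ω).choose l : ℝ) := by positivity
      linarith
  have hfnonneg : ∀ ω, 0 ≤ f ω := fun ω =>
    mul_nonneg (hfac1 ω).1 (hfac2 ω).1
  have hfbound : ∀ ω, f ω ≤ c1 * c2 := fun ω =>
    mul_le_mul (hfac1 ω).2 (hfac2 ω).2 (hfac2 ω).1 hc1pos.le
  have hfmeas : Measurable f := by
    apply Measurable.mul
    · exact measurable_const.sub
        ((measurable_from_top (f := fun s : ℕ => (((m - s).choose k : ℕ) : ℝ))).comp hS)
    · exact measurable_const.sub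
        ((measurable_from_top (f := fun t : ℕ => (((n - t).choose l : ℕ) : ℝ))).comp hT)
  have hfint : Integrable f μ := by
    apply Integrable.mono' (integrable_const (c1 * c2)) hfmeas.aestronglyMeasurable
    filter_upwards with ω
    rw [Real.norm_eq_abs, abs_of_nonneg (hfnonneg ω)]
    exact hfbound ω
  -- pointwise: f ≤ indicator
  have hptwise : ∀ ω, f ω ≤ A.indicator (fun _ => c1 * c2) ω := by
    intro ω
    by_cases hω : ω ∈ A
    · rw [Set.indicator_of_mem hω]
      exact hfbound ω
    · rw [Set.indicator_of_notMem hω]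
      have : S ω = 0 ∨ T ω = 0 := by
        simp only [hA, Set.mem_setOf_eq, not_and_or, not_le, Nat.lt_one_iff] at hω
        exact hω
      rcases this with h | h
      · simp [hf, h, hc1]
      · simp [hf, h, hc2]
  have hint : ∫ ω, f ω ∂μ ≤ (μ A).toReal * (c1 * c2) := by
    calc ∫ ω, f ω ∂μ ≤ ∫ ω, A.indicator (fun _ => c1 * c2) ω ∂μ := by
          apply integral_mono hfint _ hptwise
          exact (integrable_const (c1 * c2)).indicator hAmeas
      _ = (μ A).toReal * (c1 * c2) := by
          rw [integral_indicator_const _ hAmeas, smul_eq_mul, measureReal_def]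
  rw [ge_iff_le, div_le_iff₀ (by positivity)]
  exact hint
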